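/- Let O be a noetherian local ring with maximal ideal m and residue field k = O/m, and let I ⊆ O be an ideal. Suppose f ∈ O is such that every k-linear functional ψ : m/m^{n+1} → k vanishing on the image of I in O/m^{n+1} also vanishes on the image of f, for every n ≥ 0. If additionally f ∈ m, then f ∈ ⋂_n (m^{n+1} + I); hence if I is primary, f ∈ I. -/
import Mathlib


/-- `O` a noetherian local ring with residue field `k` (here: a `k`-algebra
such that `k → O/m` is bijective), `I ⊆ O` an ideal, `f ∈ m`.  If for every `n` every
`k`-linear functional `ψ : m/m^{n+1} → k` vanishing on the image of `I` also vanishes on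
the image of `f`, then `f ∈ ⋂_n (m^{n+1} + I)`; hence if `I` is primary then `f ∈ I`. -/
theorem stmt_12 (k O : Type*) [Field k] [CommRing O] [Algebra k O]
    [IsNoetherianRing O] [IsLocalRing O]
    (hres : Function.Bijective
      ((Ideal.Quotient.mk (IsLocalRing.maximalIdeal O)).comp (algebraMap k O)))
    (I : Ideal O) (f : O) (hf : f ∈ IsLocalRing.maximalIdeal O)
    (h : ∀ n : ℕ,
      ∀ ψ : ↥(Submodule.restrictScalars k
          ((IsLocalRing.maximalIdeal O).map
            (Ideal.Quotient.mk (IsLocalRing.maximalIdeal O ^ (n + 1))))) →ₗ[k] k,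
        (∀ (x : O ⧸ IsLocalRing.maximalIdeal O ^ (n + 1))
            (hx : x ∈ (IsLocalRing.maximalIdeal O).map
              (Ideal.Quotient.mk (IsLocalRing.maximalIdeal O ^ (n + 1)))),
          x ∈ I.map (Ideal.Quotient.mk (IsLocalRing.maximalIdeal O ^ (n + 1))) →
            ψ ⟨x, hx⟩ = 0) →
        ψ ⟨Ideal.Quotient.mk (IsLocalRing.maximalIdeal O ^ (n + 1)) f,
            by exact Ideal.mem_map_of_mem _ hf⟩ = 0) :
    (f ∈ ⨅ n : ℕ, (IsLocalRing.maximalIdeal O ^ (n + 1) ⊔ I)) ∧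
      (I.IsPrimary → f ∈ I) := by
  have key : ∀ n : ℕ, f ∈ IsLocalRing.maximalIdeal O ^ (n + 1) ⊔ I := by
    intro n
    set m := IsLocalRing.maximalIdeal O
    set mk := Ideal.Quotient.mk (m ^ (n + 1))
    set M := Submodule.restrictScalars k (m.map mk)
    set W : Submodule k ↥M :=
      Submodule.comap M.subtype (Submodule.restrictScalars k (I.map mk)) with hW
    have hv : (⟨mk f, Ideal.mem_map_of_mem _ hf⟩ : ↥M) ∈ W := by
      rw [← Subspace.forall_mem_dualAnnihilator_apply_eq_zero_iff W]
      intro φ hφ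
      refine h n φ ?_
      intro x hx hxI
      exact (Submodule.mem_dualAnnihilator φ).mp hφ ⟨x, hx⟩ hxI
    have hfI : mk f ∈ I.map mk := hv
    obtain ⟨y, hy, hyf⟩ :=
      (Ideal.mem_map_iff_of_surjective mk Ideal.Quotient.mk_surjective).mp hfI
    have hsub : f - y ∈ m ^ (n + 1) := Ideal.Quotient.eq.mp hyf.symm
    have : f = (f - y) + y := by ring
    rw [this]
    exact Ideal.add_mem _ (Ideal.mem_sup_left hsub) (Ideal.mem_sup_right hy)
  refine ⟨Ideal.mem_iInf.mpr key, fun hI => ?_⟩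
  have hItop : I ≠ ⊤ := hI.1
  have : Nontrivial (O ⧸ I) := Ideal.Quotient.nontrivial_iff.mpr hItop
  have hloc : IsLocalRing (O ⧸ I) :=
    IsLocalRing.of_surjective' (Ideal.Quotient.mk I) Ideal.Quotient.mk_surjective
  set J := (IsLocalRing.maximalIdeal O).map (Ideal.Quotient.mk I) with hJ
  have hJtop : J ≠ ⊤ := by
    intro htop
    have hle : I ≤ IsLocalRing.maximalIdeal O := IsLocalRing.le_maximalIdeal hItop
    have : Ideal.comap (Ideal.Quotient.mk I) J = ⊤ := by rw [htop]; exact Ideal.comap_top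
    rw [hJ, Ideal.comap_map_of_surjective _ Ideal.Quotient.mk_surjective,
      ← RingHom.ker_eq_comap_bot, Ideal.mk_ker, sup_eq_left.mpr hle] at this
    exact (IsLocalRing.maximalIdeal.isMaximal O).ne_top this
  have hbot : (⨅ n : ℕ, J ^ n) = ⊥ := Ideal.iInf_pow_eq_bot_of_isLocalRing J hJtop
  have hmem : Ideal.Quotient.mk I f ∈ (⨅ n : ℕ, J ^ n) := by
    rw [Ideal.mem_iInf]
    intro n
    cases n with
    | zero => simp
    | succ n =>
      obtain ⟨a, ha, b, hb, hab⟩ := Submodule.mem_sup.mp (key n)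
      have : Ideal.Quotient.mk I f = Ideal.Quotient.mk I a := by
        rw [← hab, map_add, Ideal.Quotient.eq_zero_iff_mem.mpr hb, add_zero]
      rw [this, hJ, ← Ideal.map_pow]
      exact Ideal.mem_map_of_mem _ ha
  rw [hbot] at hmem
  exact Ideal.Quotient.eq_zero_iff_mem.mp (Submodule.mem_bot _ |>.mp hmem)
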